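/- In the type Â_{n-1} model (n even), let C = (Π_{i odd} s_i)(Π_{i even} s_i) be the Coxeter element for the standard (alternating) orientation. Then C(e_i) = e_{i+2} - (2/n)δ for i even and C(e_i) = e_{i-2} + (2/n)δ for i odd; consequently C^{n/2}(e_i) = e_i - δ for i even and C^{n/2}(e_i) = e_i + δ for i odd. -/

import Mathlib

open Finset

/-- The ambient vector space `V = ℝ^{n+1}` with basis `δ, e_i (i ∈ ℤ/n)`. -/
abbrev TypeAVec (n : ℕ) : Type := (ZMod n → ℝ) × ℝ

/-- The basis vector `e_i`. -/
noncomputable def eVec {n : ℕ} (i : ZMod n) : TypeAVec n := (Pi.single i 1, 0)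

/-- The basis vector `δ`. -/
def deltaVec (n : ℕ) : TypeAVec n := (0, 1)

/-- The inner product with `(e_i, e_j) = δ_{ij}` and `(v, δ) = 0`. -/
noncomputable def formA {n : ℕ} [NeZero n] (v w : TypeAVec n) : ℝ := ∑ i, v.1 i * w.1 i

/-- The simple root `α_i = e_i - e_{i+1} + δ/n`. -/
noncomputable def alphaA {n : ℕ} (i : ZMod n) : TypeAVec n :=
  eVec i - eVec (i + 1) + (1 / (n : ℝ)) • deltaVec n

/-- The reflection `s_i(v) = v - (v, α_i) α_i`. -/
noncomputable def reflA {n : ℕ} [NeZero n] (i : ZMod n) (v : TypeAVec n) : TypeAVec n :=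
  v - formA v (alphaA i) • alphaA i

set_option linter.unusedSectionVars false
variable {n : ℕ} [NeZero n]

lemma alphaA_eq (i : ZMod n) : alphaA i = ((Pi.single i 1 - Pi.single (i+1) 1 : ZMod n → ℝ), 1/(n:ℝ)) := by
  simp [alphaA, eVec, deltaVec, Prod.ext_iff]

lemma formA_pair (k i : ZMod n) (c : ℝ) :
    formA ((Pi.single k 1, c) : TypeAVec n) (alphaA i)
      = (if k = i then (1:ℝ) else 0) - (if k = i + 1 then 1 else 0) := by
  simp [formA, alphaA_eq, Pi.single_apply, mul_sub, Finset.sum_sub_distrib, eq_comm]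

lemma reflA_fix (i k : ZMod n) (c : ℝ) (h1 : k ≠ i) (h2 : k ≠ i + 1) :
    reflA i ((Pi.single k 1, c) : TypeAVec n) = (Pi.single k 1, c) := by
  simp [reflA, formA_pair, h1, h2]

lemma reflA_self (i : ZMod n) (c : ℝ) (h : i ≠ i + 1) :
    reflA i ((Pi.single i 1, c) : TypeAVec n) = (Pi.single (i+1) 1, c - 1/(n:ℝ)) := by
  rw [reflA, formA_pair, if_pos rfl, if_neg h, alphaA_eq]
  refine Prod.ext ?_ ?_
  · show Pi.single i 1 - (1 - 0) • (Pi.single i 1 - Pi.single (i+1) 1) = _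
    module
  · show c - (1 - 0) * (1/(n:ℝ)) = _
    ring

lemma reflA_succ (i : ZMod n) (c : ℝ) (h : i + 1 ≠ i) :
    reflA i ((Pi.single (i+1) 1, c) : TypeAVec n) = (Pi.single i 1, c + 1/(n:ℝ)) := by
  rw [reflA, formA_pair, if_neg h, if_pos rfl, alphaA_eq]
  refine Prod.ext ?_ ?_
  · show Pi.single (i+1) 1 - (0 - 1) • (Pi.single i 1 - Pi.single (i+1) 1) = _
    module
  · show c - (0 - 1) * (1/(n:ℝ)) = _
    ring

lemma fold_fix (l : List (ZMod n)) (k : ZMod n) (c : ℝ)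
    (h : ∀ j ∈ l, j ≠ k ∧ j + 1 ≠ k) :
    l.foldr (fun i f => reflA i ∘ f) id ((Pi.single k 1, c) : TypeAVec n) = (Pi.single k 1, c) := by
  induction l with
  | nil => rfl
  | cons a l ih =>
    have ha := h a List.mem_cons_self
    simp only [List.foldr_cons, Function.comp_apply,
      ih (fun j hj => h j (List.mem_cons_of_mem a hj))]
    exact reflA_fix a k c (fun e => ha.1 e.symm) (fun e => ha.2 (by rw [← e]))

lemma fold_move (l : List (ZMod n)) (k : ZMod n) (c : ℝ) (hk : k ∈ l) (hd : l.Nodup)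
    (h1 : ∀ j ∈ l, j ≠ k + 1) (h2 : ∀ j ∈ l, j + 1 ≠ k) (hne : k ≠ k + 1) :
    l.foldr (fun i f => reflA i ∘ f) id ((Pi.single k 1, c) : TypeAVec n)
      = (Pi.single (k+1) 1, c - 1/(n:ℝ)) := by
  induction l with
  | nil => exact absurd hk List.not_mem_nil
  | cons a l ih =>
    rcases List.nodup_cons.mp hd with ⟨hal, hld⟩
    simp only [List.foldr_cons, Function.comp_apply]
    rcases eq_or_ne a k with rfl | hak
    · rw [fold_fix l a c (fun j hj => ⟨fun e => hal (e ▸ hj), h2 j (List.mem_cons_of_mem a hj)⟩)]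
      exact reflA_self a c hne
    · rw [ih ((List.mem_cons.mp hk).resolve_left (fun e => hak e.symm)) hld
        (fun j hj => h1 j (List.mem_cons_of_mem a hj))
        (fun j hj => h2 j (List.mem_cons_of_mem a hj))]
      exact reflA_fix a (k+1) _ (h1 a List.mem_cons_self).symm
        (fun e => hak (add_right_cancel e).symm)

lemma fold_move' (l : List (ZMod n)) (k : ZMod n) (c : ℝ) (hk : k - 1 ∈ l) (hd : l.Nodup)
    (h1 : ∀ j ∈ l, j ≠ k) (h2 : ∀ j ∈ l, j + 1 ≠ k - 1) (hne : k - 1 ≠ k) :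
    l.foldr (fun i f => reflA i ∘ f) id ((Pi.single k 1, c) : TypeAVec n)
      = (Pi.single (k-1) 1, c + 1/(n:ℝ)) := by
  induction l with
  | nil => exact absurd hk List.not_mem_nil
  | cons a l ih =>
    rcases List.nodup_cons.mp hd with ⟨hal, hld⟩
    simp only [List.foldr_cons, Function.comp_apply]
    rcases eq_or_ne a (k - 1) with rfl | hak
    · rw [fold_fix l k c (fun j hj => ⟨h1 j (List.mem_cons_of_mem _ hj),
        fun e => hal ((eq_sub_of_add_eq e) ▸ hj)⟩)]
      have h' : k - 1 + 1 ≠ k - 1 := by rw [sub_add_cancel]; exact hne.symm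
      have := reflA_succ (k-1) c h'
      rw [sub_add_cancel] at this
      exact this
    · rw [ih ((List.mem_cons.mp hk).resolve_left (fun e => hak e.symm)) hld
        (fun j hj => h1 j (List.mem_cons_of_mem a hj))
        (fun j hj => h2 j (List.mem_cons_of_mem a hj))]
      exact reflA_fix a (k-1) _ hak.symm
        (fun e => h2 a List.mem_cons_self e.symm)

lemma val_add_one_mod (hn : Even n) (i : ZMod n) : (i + 1).val % 2 = (i.val + 1) % 2 := by
  have h2 : 2 ≤ n := by
    rcases hn with ⟨r, rfl⟩
    have : r ≠ 0 := by rintro rfl; exact (NeZero.ne 0) rfl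
    omega
  haveI : Fact (1 < n) := ⟨h2⟩
  rw [ZMod.val_add, ZMod.val_one, Nat.mod_mod_of_dvd _ hn.two_dvd]

lemma even_succ_of_odd (hn : Even n) {i : ZMod n} (h : Odd i.val) : Even ((i+1).val) := by
  have := val_add_one_mod hn i
  rw [Nat.even_iff, this, Nat.add_mod, Nat.odd_iff.mp h]

lemma odd_succ_of_even (hn : Even n) {i : ZMod n} (h : Even i.val) : Odd ((i+1).val) := by
  have := val_add_one_mod hn i
  rw [Nat.odd_iff, this, Nat.add_mod, Nat.even_iff.mp h]

lemma even_pred_of_odd (hn : Even n) {i : ZMod n} (h : Odd i.val) : Even ((i-1).val) := by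
  rcases Nat.even_or_odd (i-1).val with he | ho
  · exact he
  · have := even_succ_of_odd hn ho
    rw [sub_add_cancel] at this
    simp [Nat.even_iff, Nat.odd_iff.mp h] at this

lemma odd_pred_of_even (hn : Even n) {i : ZMod n} (h : Even i.val) : Odd ((i-1).val) := by
  rcases Nat.even_or_odd (i-1).val with he | ho
  · have := odd_succ_of_even hn he
    rw [sub_add_cancel] at this
    simp [Nat.odd_iff, Nat.even_iff.mp h] at this
  · exact ho

lemma zmod_one_ne_zero (hn : Even n) : (1 : ZMod n) ≠ 0 := by
  have h2 : 2 ≤ n := by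
    rcases hn with ⟨r, rfl⟩
    have : r ≠ 0 := by rintro rfl; exact (NeZero.ne 0) rfl
    omega
  haveI : Fact (1 < n) := ⟨h2⟩
  exact one_ne_zero

lemma ne_add_one (hn : Even n) (i : ZMod n) : i ≠ i + 1 := fun e =>
  zmod_one_ne_zero hn (by linear_combination -e)

lemma foldr_comp (l : List (ZMod n)) (g : TypeAVec n → TypeAVec n) :
    l.foldr (fun i f => reflA i ∘ f) g = (l.foldr (fun i f => reflA i ∘ f) id) ∘ g := by
  induction l with
  | nil => rfl
  | cons a l ih => simp [List.foldr_cons, ih]; rfl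

lemma parity_ne {a b : ZMod n} (ha : Even a.val) (hb : Odd b.val) : a ≠ b := by
  intro e; subst e
  rw [Nat.even_iff] at ha; rw [Nat.odd_iff] at hb; omega

lemma even_add_two_zmod (hn : Even n) {i : ZMod n} (h : Even i.val) : Even ((i+2).val) := by
  have : i + 2 = i + 1 + 1 := by ring
  rw [this]
  exact even_succ_of_odd hn (odd_succ_of_even hn h)

lemma odd_sub_two_zmod (hn : Even n) {i : ZMod n} (h : Odd i.val) : Odd ((i-2).val) := by
  have : i - 2 = i - 1 - 1 := by ring
  rw [this]
  exact odd_pred_of_even hn (even_pred_of_odd hn h)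

section main
variable (hn : Even n) (l₁ l₂ : List (ZMod n))
  (h₁ : ∀ i : ZMod n, i ∈ l₁ ↔ Odd i.val) (h₁d : l₁.Nodup)
  (h₂ : ∀ i : ZMod n, i ∈ l₂ ↔ Even i.val) (h₂d : l₂.Nodup)

include hn h₁ h₁d h₂ h₂d

lemma cox_even (i : ZMod n) (hi : Even i.val) (c : ℝ) :
    (l₁ ++ l₂).foldr (fun i f => reflA i ∘ f) id ((Pi.single i 1, c) : TypeAVec n)
      = (Pi.single (i+2) 1, c - 2/(n:ℝ)) := by
  rw [List.foldr_append, foldr_comp, Function.comp_apply]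
  rw [fold_move l₂ i c ((h₂ i).mpr hi) h₂d
    (fun j hj => (parity_ne ((h₂ j).mp hj) (odd_succ_of_even hn hi)))
    (fun j hj => (parity_ne hi (odd_succ_of_even hn ((h₂ j).mp hj))).symm)
    (ne_add_one hn i)]
  rw [fold_move l₁ (i+1) _ ((h₁ _).mpr (odd_succ_of_even hn hi)) h₁d
    (fun j hj => (parity_ne (even_succ_of_odd hn (odd_succ_of_even hn hi)) ((h₁ j).mp hj)).symm)
    (fun j hj => parity_ne (even_succ_of_odd hn ((h₁ j).mp hj)) (odd_succ_of_even hn hi))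
    (ne_add_one hn _)]
  have e1 : i + 1 + 1 = i + 2 := by ring
  rw [e1]
  refine Prod.ext rfl ?_
  show c - 1/(n:ℝ) - 1/(n:ℝ) = c - 2/(n:ℝ)
  ring

lemma cox_odd (i : ZMod n) (hi : Odd i.val) (c : ℝ) :
    (l₁ ++ l₂).foldr (fun i f => reflA i ∘ f) id ((Pi.single i 1, c) : TypeAVec n)
      = (Pi.single (i-2) 1, c + 2/(n:ℝ)) := by
  rw [List.foldr_append, foldr_comp, Function.comp_apply]
  rw [fold_move' l₂ i c ((h₂ _).mpr (even_pred_of_odd hn hi)) h₂d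
    (fun j hj => parity_ne ((h₂ j).mp hj) hi)
    (fun j hj => (parity_ne (even_pred_of_odd hn hi) (odd_succ_of_even hn ((h₂ j).mp hj))).symm)
    (parity_ne (even_pred_of_odd hn hi) hi)]
  have e2 : i - 1 - 1 = i - 2 := by ring
  have hodd2 : Odd (i-1-1).val := by rw [e2]; exact odd_sub_two_zmod hn hi
  rw [fold_move' l₁ (i-1) _ ((h₁ _).mpr hodd2) h₁d
    (fun j hj => (parity_ne (even_pred_of_odd hn hi) ((h₁ j).mp hj)).symm)
    (fun j hj => parity_ne (even_succ_of_odd hn ((h₁ j).mp hj)) hodd2)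
    ((parity_ne (even_pred_of_odd hn hi) hodd2).symm)]
  rw [e2]
  refine Prod.ext rfl ?_
  show c + 1/(n:ℝ) + 1/(n:ℝ) = c + 2/(n:ℝ)
  ring

omit h₁ h₁d h₂ h₂d in
lemma even_add_two_mul (m : ℕ) {i : ZMod n} (h : Even i.val) :
    Even ((i + ((2*m : ℕ) : ZMod n)).val) := by
  induction m with
  | zero => simpa using h
  | succ m ih =>
    have e : ((2*(m+1) : ℕ) : ZMod n) = ((2*m : ℕ) : ZMod n) + 2 := by push_cast; ring
    rw [e, ← add_assoc]
    exact even_add_two_zmod hn ih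

omit h₁ h₁d h₂ h₂d in
lemma odd_sub_two_mul (m : ℕ) {i : ZMod n} (h : Odd i.val) :
    Odd ((i - ((2*m : ℕ) : ZMod n)).val) := by
  induction m with
  | zero => simpa using h
  | succ m ih =>
    have e : i - ((2*(m+1) : ℕ) : ZMod n) = i - ((2*m : ℕ) : ZMod n) - 2 := by push_cast; ring
    rw [e]
    exact odd_sub_two_zmod hn ih

lemma cox_iter_even (m : ℕ) (i : ZMod n) (hi : Even i.val) (c : ℝ) :
    ((l₁ ++ l₂).foldr (fun i f => reflA i ∘ f) id)^[m] ((Pi.single i 1, c) : TypeAVec n)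
      = (Pi.single (i + ((2*m : ℕ) : ZMod n)) 1, c - 2*(m:ℝ)/(n:ℝ)) := by
  induction m with
  | zero => norm_num
  | succ m ih =>
    rw [Function.iterate_succ_apply', ih,
      cox_even hn l₁ l₂ h₁ h₁d h₂ h₂d _ (even_add_two_mul hn m hi)]
    refine Prod.ext ?_ ?_
    · show Pi.single (i + ((2*m:ℕ):ZMod n) + 2) 1 = _
      push_cast
      ring_nf
    · show c - 2*(m:ℝ)/(n:ℝ) - 2/(n:ℝ) = c - 2*((m+1 : ℕ):ℝ)/(n:ℝ)
      push_cast
      ring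

lemma cox_iter_odd (m : ℕ) (i : ZMod n) (hi : Odd i.val) (c : ℝ) :
    ((l₁ ++ l₂).foldr (fun i f => reflA i ∘ f) id)^[m] ((Pi.single i 1, c) : TypeAVec n)
      = (Pi.single (i - ((2*m : ℕ) : ZMod n)) 1, c + 2*(m:ℝ)/(n:ℝ)) := by
  induction m with
  | zero => norm_num
  | succ m ih =>
    rw [Function.iterate_succ_apply', ih,
      cox_odd hn l₁ l₂ h₁ h₁d h₂ h₂d _ (odd_sub_two_mul hn m hi)]
    refine Prod.ext ?_ ?_
    · show Pi.single (i - ((2*m:ℕ):ZMod n) - 2) 1 = _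
      push_cast
      ring_nf
    · show c + 2*(m:ℝ)/(n:ℝ) + 2/(n:ℝ) = c + 2*((m+1 : ℕ):ℝ)/(n:ℝ)
      push_cast
      ring

end main


/-- Let `Cox = (Π_{i odd} s_i)(Π_{i even} s_i)` be the Coxeter element
for the standard alternating orientation (the products are over any enumerations `l₁` of
the odd and `l₂` of the even residues; this is well defined since the reflections with
indices of equal parity pairwise commute). Then `Cox(e_i) = e_{i+2} - (2/n)δ` for `i` even,
`Cox(e_i) = e_{i-2} + (2/n)δ` for `i` odd, and consequently `Cox^{n/2}(e_i) = e_i - δ` for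
`i` even and `Cox^{n/2}(e_i) = e_i + δ` for `i` odd. -/
theorem typeA_coxeter_action (n : ℕ) [NeZero n] (hn : Even n)
    (l₁ l₂ : List (ZMod n)) (h₁ : ∀ i : ZMod n, i ∈ l₁ ↔ Odd i.val) (h₁d : l₁.Nodup)
    (h₂ : ∀ i : ZMod n, i ∈ l₂ ↔ Even i.val) (h₂d : l₂.Nodup)
    (Cox : TypeAVec n → TypeAVec n)
    (hCox : Cox = (l₁ ++ l₂).foldr (fun i f => reflA i ∘ f) id) :
    (∀ i : ZMod n, Even i.val →
        Cox (eVec i) = eVec (i + 2) - ((2 : ℝ) / n) • deltaVec n) ∧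
    (∀ i : ZMod n, Odd i.val →
        Cox (eVec i) = eVec (i - 2) + ((2 : ℝ) / n) • deltaVec n) ∧
    (∀ i : ZMod n, Even i.val → Cox^[n / 2] (eVec i) = eVec i - deltaVec n) ∧
    (∀ i : ZMod n, Odd i.val → Cox^[n / 2] (eVec i) = eVec i + deltaVec n) := by
  subst hCox
  have hn0 : (n : ℝ) ≠ 0 := Nat.cast_ne_zero.mpr (NeZero.ne n)
  have hcast : ((2 * (n/2) : ℕ) : ZMod n) = 0 := by
    rw [Nat.mul_div_cancel' hn.two_dvd, ZMod.natCast_self]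
  have hcastR : 2 * ((n/2 : ℕ) : ℝ) = (n:ℝ) := by
    exact_mod_cast congrArg (Nat.cast : ℕ → ℝ) (Nat.mul_div_cancel' hn.two_dvd)
  refine ⟨?_, ?_, ?_, ?_⟩
  · intro i hi
    rw [show (eVec i : TypeAVec n) = (Pi.single i 1, 0) from rfl,
      cox_even hn l₁ l₂ h₁ h₁d h₂ h₂d i hi 0]
    refine Prod.ext ?_ ?_
    · simp [eVec, deltaVec]
    · show (0:ℝ) - 2/(n:ℝ) = (eVec (i+2) - ((2:ℝ)/n) • deltaVec n).2
      simp [eVec, deltaVec]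
  · intro i hi
    rw [show (eVec i : TypeAVec n) = (Pi.single i 1, 0) from rfl,
      cox_odd hn l₁ l₂ h₁ h₁d h₂ h₂d i hi 0]
    refine Prod.ext ?_ ?_
    · simp [eVec, deltaVec]
    · show (0:ℝ) + 2/(n:ℝ) = (eVec (i-2) + ((2:ℝ)/n) • deltaVec n).2
      simp [eVec, deltaVec]
  · intro i hi
    rw [show (eVec i : TypeAVec n) = (Pi.single i 1, 0) from rfl,
      cox_iter_even hn l₁ l₂ h₁ h₁d h₂ h₂d (n/2) i hi 0, hcast]
    refine Prod.ext ?_ ?_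
    · simp [eVec, deltaVec]
    · show (0:ℝ) - 2*((n/2 : ℕ):ℝ)/(n:ℝ) = (eVec i - deltaVec n).2
      simp only [eVec, deltaVec]
      show (0:ℝ) - 2*((n/2 : ℕ):ℝ)/(n:ℝ) = 0 - 1
      rw [hcastR]
      field_simp
  · intro i hi
    rw [show (eVec i : TypeAVec n) = (Pi.single i 1, 0) from rfl,
      cox_iter_odd hn l₁ l₂ h₁ h₁d h₂ h₂d (n/2) i hi 0, hcast]
    refine Prod.ext ?_ ?_
    · simp [eVec, deltaVec]
    · show (0:ℝ) + 2*((n/2 : ℕ):ℝ)/(n:ℝ) = (eVec i + deltaVec n).2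
      simp only [eVec, deltaVec]
      show (0:ℝ) + 2*((n/2 : ℕ):ℝ)/(n:ℝ) = 0 + 1
      rw [hcastR]
      field_simp
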